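/- Let n ≥ 1 and for m ≥ 1 let s_m(ℤ^n) denote the number of subgroups of ℤ^n of index at most m. Then s_m(ℤ^n)/m^n converges, as m → ∞, to (1/n) · ζ(n)·ζ(n−1)⋯ζ(2), where ζ denotes the Riemann zeta function and the product is empty (equal to 1) when n = 1. In particular, for n = 2, s_m(ℤ^2)/m^2 → π²/12. -/

import Mathlib

open Finset Filter

open Topology

/-- `s_m(ℤ^n)`, the number of subgroups of `ℤ^n` of finite index at most `m`. -/
noncomputable def subgroupCountUpTo (n m : ℕ) : ℕ :=
  Nat.card {H : AddSubgroup (Fin n → ℤ) // 1 ≤ H.index ∧ H.index ≤ m}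


open Finset Filter AddSubgroup Function

namespace SubgroupGrowthProof

/-- number of subgroups of `ℤ^n` of index exactly `j` (recursively defined). -/
def acount : ℕ → ℕ → ℕ
  | 0, j => if j = 1 then 1 else 0
  | (n+1), j => ∑ p ∈ j.divisorsAntidiagonal, p.1 * acount n p.1

variable {A : Type*} [AddCommGroup A]

/-- The subgroup of `ℤ × A` generated by `(d, v)` and `{0} × K`. -/
def hmk (d : ℕ) (v : A) (K : AddSubgroup A) : AddSubgroup (ℤ × A) :=
  zmultiples ((d : ℤ), v) ⊔ (⊥ : AddSubgroup ℤ).prod K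

lemma mem_hmk {d : ℕ} {v : A} {K : AddSubgroup A} {x : ℤ × A} :
    x ∈ hmk d v K ↔ ∃ k : ℤ, x.1 = k * d ∧ x.2 - k • v ∈ K := by
  constructor
  · intro h
    rcases AddSubgroup.mem_sup.mp h with ⟨y, hy, z, hz, hyz⟩
    rcases AddSubgroup.mem_zmultiples_iff.mp hy with ⟨k, hk⟩
    rcases AddSubgroup.mem_prod.mp hz with ⟨hz1, hz2⟩
    rw [AddSubgroup.mem_bot] at hz1
    refine ⟨k, ?_, ?_⟩
    · have h1 := congrArg Prod.fst hyz
      simp only [Prod.fst_add] at h1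
      rw [← h1, ← hk, hz1]
      simp [Prod.smul_def, smul_eq_mul, mul_comm]
    · have h2 := congrArg Prod.snd hyz
      simp only [Prod.snd_add] at h2
      have : x.2 - k • v = z.2 := by
        rw [← h2, ← hk]; simp [Prod.smul_def]
      rwa [this]
  · rintro ⟨k, h1, h2⟩
    have hx : x = k • (((d : ℤ), v) : ℤ × A) + (0, x.2 - k • v) := by
      ext
      · simp [Prod.smul_def, h1, smul_eq_mul, mul_comm]
      · simp [Prod.smul_def]
    rw [hx]
    exact AddSubgroup.add_mem_sup (zsmul_mem (mem_zmultiples _) k)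
      (AddSubgroup.mem_prod.mpr ⟨AddSubgroup.mem_bot.mpr rfl, h2⟩)

lemma comap_inr_hmk {d : ℕ} (hd : d ≠ 0) (v : A) (K : AddSubgroup A) :
    (hmk d v K).comap (AddMonoidHom.inr ℤ A) = K := by
  ext y
  simp only [AddSubgroup.mem_comap, AddMonoidHom.inr_apply, mem_hmk]
  constructor
  · rintro ⟨k, h1, h2⟩
    have hk : k = 0 := by
      rcases mul_eq_zero.mp h1.symm with h | h
      · exact h
      · exact absurd (by exact_mod_cast h) hd
    simpa [hk] using h2
  · intro hy
    exact ⟨0, by simp, by simpa using hy⟩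

lemma map_fst_hmk {d : ℕ} (v : A) (K : AddSubgroup A) :
    (hmk d v K).map (AddMonoidHom.fst ℤ A) = zmultiples (d : ℤ) := by
  ext x
  simp only [AddSubgroup.mem_map, AddMonoidHom.coe_fst, Int.mem_zmultiples_iff]
  constructor
  · rintro ⟨y, hy, rfl⟩
    rcases mem_hmk.mp hy with ⟨k, h1, _⟩
    exact ⟨k, by rw [h1]; ring⟩
  · rintro ⟨k, rfl⟩
    refine ⟨((d : ℤ) * k, k • v), mem_hmk.mpr ⟨k, by ring, by simpa using K.zero_mem⟩, rfl⟩

lemma index_hmk {d : ℕ} (hd : d ≠ 0) (v : A) (K : AddSubgroup A) :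
    (hmk d v K).index = K.index * d := by
  set H := hmk d v K with hH
  set N : AddSubgroup (ℤ × A) := (AddMonoidHom.inr ℤ A).range with hN
  have hNprod : N = (⊥ : AddSubgroup ℤ).prod ⊤ := by
    ext ⟨x, y⟩
    simp [hN, AddMonoidHom.mem_range, Prod.ext_iff, eq_comm, AddSubgroup.mem_prod]
  have hsup : H ⊔ N = (zmultiples ((d : ℤ))).prod ⊤ := by
    apply le_antisymm
    · refine sup_le ?_ ?_
      · intro x hx
        rcases mem_hmk.mp hx with ⟨k, h1, _⟩
        exact AddSubgroup.mem_prod.mpr ⟨Int.mem_zmultiples_iff.mpr ⟨k, by rw [h1]; ring⟩,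
          AddSubgroup.mem_top _⟩
      · rw [hNprod]
        exact AddSubgroup.prod_mono bot_le le_rfl
    · rintro ⟨x, y⟩ hx
      rcases AddSubgroup.mem_prod.mp hx with ⟨h1, -⟩
      rcases Int.mem_zmultiples_iff.mp h1 with ⟨k, hk⟩
      have hxy : ((x, y) : ℤ × A) = k • (((d : ℤ), v) : ℤ × A) + (0, y - k • v) := by
        have hx' : x = k * (d : ℤ) := by rw [mul_comm]; exact hk
        ext
        · simp [Prod.smul_def, hx', smul_eq_mul, mul_comm]
        · simp [Prod.smul_def]
      rw [hxy]
      refine AddSubgroup.add_mem _ (AddSubgroup.mem_sup_left ?_) (AddSubgroup.mem_sup_right ?_)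
      · exact zsmul_mem (AddSubgroup.mem_sup_left (mem_zmultiples _)) k
      · exact hNprod ▸ AddSubgroup.mem_prod.mpr ⟨AddSubgroup.mem_bot.mpr rfl, AddSubgroup.mem_top _⟩
  have h1 : H.relIndex (H ⊔ N) * (H ⊔ N).index = H.index :=
    AddSubgroup.relIndex_mul_index le_sup_left
  have h2 : H.relIndex (N ⊔ H) = H.relIndex N := AddSubgroup.relIndex_sup_right (H := N) (K := H)
  have h3 : H.relIndex N = K.index := by
    rw [hN, ← AddSubgroup.index_comap H (AddMonoidHom.inr ℤ A), comap_inr_hmk hd]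
  have h4 : (H ⊔ N).index = d := by
    rw [hsup, AddSubgroup.index_prod, AddSubgroup.index_top, Int.index_zmultiples]
    simp
  rw [← h1, sup_comm H N, h2, h3, sup_comm N H, h4]

lemma exists_hmk {H : AddSubgroup (ℤ × A)} (hH : H.index ≠ 0) :
    ∃ (d : ℕ) (v : A), d ≠ 0 ∧ ((d : ℤ), v) ∈ H ∧
      H = hmk d v (H.comap (AddMonoidHom.inr ℤ A)) := by
  obtain ⟨a, ha⟩ := Int.subgroup_cyclic (H.map (AddMonoidHom.fst ℤ A))
  have hS : H.map (AddMonoidHom.fst ℤ A) = zmultiples ((a.natAbs : ℕ) : ℤ) := by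
    rw [ha]
    ext x
    simp [← AddSubgroup.zmultiples_eq_closure, Int.mem_zmultiples_iff, Int.natAbs_dvd]
  set d := a.natAbs with hd'
  have hd : d ≠ 0 := by
    rintro h0
    rw [h0] at hS
    have hle : H ≤ (⊥ : AddSubgroup ℤ).prod ⊤ := by
      rintro ⟨x, y⟩ hx
      have : x ∈ H.map (AddMonoidHom.fst ℤ A) := ⟨(x, y), hx, rfl⟩
      rw [hS] at this
      rcases Int.mem_zmultiples_iff.mp this with ⟨k, hk⟩
      simp only [Nat.cast_zero, zero_mul] at hk
      exact AddSubgroup.mem_prod.mpr ⟨AddSubgroup.mem_bot.mpr (by omega), AddSubgroup.mem_top _⟩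
    have : ((⊥ : AddSubgroup ℤ).prod ⊤).index ∣ H.index := AddSubgroup.index_dvd_of_le hle
    rw [AddSubgroup.index_prod, AddSubgroup.index_top, AddSubgroup.index_bot] at this
    simp only [Nat.card_eq_zero_of_infinite, mul_one, zero_dvd_iff] at this
    exact hH this
  have hdS : ((d : ℤ)) ∈ H.map (AddMonoidHom.fst ℤ A) := by
    rw [hS]; exact mem_zmultiples _
  rcases hdS with ⟨y, hyH, hy1⟩
  refine ⟨d, y.2, hd, ?_, ?_⟩
  · have : y = ((d : ℤ), y.2) := Prod.ext_iff.mpr ⟨hy1, rfl⟩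
    rwa [this] at hyH
  · have hyH' : (((d : ℤ), y.2) : ℤ × A) ∈ H := by
      have : y = ((d : ℤ), y.2) := Prod.ext_iff.mpr ⟨hy1, rfl⟩
      rwa [this] at hyH
    apply le_antisymm
    · intro z hz
      have hz1 : z.1 ∈ H.map (AddMonoidHom.fst ℤ A) := ⟨z, hz, rfl⟩
      rw [hS] at hz1
      rcases Int.mem_zmultiples_iff.mp hz1 with ⟨k, hk⟩
      refine mem_hmk.mpr ⟨k, by rw [hk]; ring, ?_⟩
      have hmem : z - k • (((d : ℤ), y.2) : ℤ × A) ∈ H := sub_mem hz (zsmul_mem hyH' k)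
      have hz0 : z - k • (((d : ℤ), y.2) : ℤ × A) = (0, z.2 - k • y.2) := by
        ext
        · simp [Prod.smul_def, hk, smul_eq_mul, mul_comm]
        · simp [Prod.smul_def]
      rw [hz0] at hmem
      exact AddSubgroup.mem_comap.mpr (by simpa using hmem)
    · rw [hmk]
      refine sup_le ?_ ?_
      · intro z hz
        rcases AddSubgroup.mem_zmultiples_iff.mp hz with ⟨k, hk⟩
        rw [← hk]
        exact zsmul_mem hyH' k
      · rintro ⟨x, w⟩ hw
        rcases AddSubgroup.mem_prod.mp hw with ⟨h1, h2⟩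
        rw [AddSubgroup.mem_bot] at h1
        subst h1
        exact AddSubgroup.mem_comap.mp h2

end SubgroupGrowthProof

namespace SubgroupGrowthProof2
open SubgroupGrowthProof
variable {A : Type*} [AddCommGroup A]

lemma hmk_congr {d : ℕ} {v w : A} {K : AddSubgroup A} (h : w - v ∈ K) :
    hmk d v K = hmk d w K := by
  ext x
  rw [mem_hmk, mem_hmk]
  constructor <;> rintro ⟨k, h1, h2⟩ <;> refine ⟨k, h1, ?_⟩
  · have hx : x.2 - k • w = (x.2 - k • v) - k • (w - v) := by rw [smul_sub]; abel
    rw [hx]; exact sub_mem h2 (zsmul_mem h k)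
  · have hx : x.2 - k • v = (x.2 - k • w) + k • (w - v) := by rw [smul_sub]; abel
    rw [hx]; exact add_mem h2 (zsmul_mem h k)

/-- Parameter space for finite-index subgroups of `ℤ × A` of index `j`. -/
def Param (A : Type*) [AddCommGroup A] (j : ℕ) : Type _ :=
  Σ p : {p : ℕ × ℕ // p ∈ j.divisorsAntidiagonal},
    Σ K : {K : AddSubgroup A // K.index = p.1.1}, A ⧸ K.1

lemma param_snd_ne_zero {j : ℕ} (p : {p : ℕ × ℕ // p ∈ j.divisorsAntidiagonal}) :
    p.1.2 ≠ 0 := by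
  have hp := Nat.mem_divisorsAntidiagonal.mp p.2
  rintro h
  rw [h, mul_zero] at hp
  exact hp.2 hp.1.symm

lemma param_fst_ne_zero {j : ℕ} (p : {p : ℕ × ℕ // p ∈ j.divisorsAntidiagonal}) :
    p.1.1 ≠ 0 := by
  have hp := Nat.mem_divisorsAntidiagonal.mp p.2
  rintro h
  rw [h, zero_mul] at hp
  exact hp.2 hp.1.symm

noncomputable def toSub {A : Type*} [AddCommGroup A] {j : ℕ} (x : Param A j) :
    {H : AddSubgroup (ℤ × A) // H.index = j} :=
  Quotient.liftOn' x.2.2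
    (fun v => (⟨hmk x.1.1.2 v x.2.1.1, by
      have hp := Nat.mem_divisorsAntidiagonal.mp x.1.2
      rw [index_hmk (param_snd_ne_zero x.1), x.2.1.2, hp.1]⟩ :
        {H : AddSubgroup (ℤ × A) // H.index = j}))
    (fun v w h => by
      apply Subtype.ext
      have h' : w - v ∈ x.2.1.1 := by
        have := QuotientAddGroup.leftRel_apply.mp h
        simpa [neg_add_eq_sub] using this
      exact hmk_congr h')

lemma toSub_mk {j : ℕ} (p : {p : ℕ × ℕ // p ∈ j.divisorsAntidiagonal})
    (K : {K : AddSubgroup A // K.index = p.1.1}) (v : A) :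
    (toSub ⟨p, K, QuotientAddGroup.mk v⟩ : {H : AddSubgroup (ℤ × A) // H.index = j}).1
      = hmk p.1.2 v K.1 := rfl

lemma toSub_bijective {j : ℕ} (hj : j ≠ 0) :
    Function.Bijective (toSub (A := A) (j := j)) := by
  constructor
  · rintro ⟨⟨⟨e, d⟩, hp⟩, ⟨K, hK⟩, q⟩ ⟨⟨⟨e', d'⟩, hp'⟩, ⟨K', hK'⟩, q'⟩ heq
    obtain ⟨v, rfl⟩ := QuotientAddGroup.mk_surjective q
    obtain ⟨v', rfl⟩ := QuotientAddGroup.mk_surjective q'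
    have hd : d ≠ 0 := param_snd_ne_zero ⟨(e, d), hp⟩
    have hd' : d' ≠ 0 := param_snd_ne_zero ⟨(e', d'), hp'⟩
    have hval : hmk d v K = hmk d' v' K' := by
      have := congrArg Subtype.val heq
      rwa [toSub_mk, toSub_mk] at this
    have hKK : K = K' := by
      rw [← comap_inr_hmk hd v K, hval, comap_inr_hmk hd' v' K']
    have hdd : d = d' := by
      have h1 := congrArg (AddSubgroup.map (AddMonoidHom.fst ℤ A)) hval
      rw [map_fst_hmk, map_fst_hmk] at h1
      have h2 := congrArg AddSubgroup.index h1
      rw [Int.index_zmultiples, Int.index_zmultiples] at h2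
      simpa using h2
    have hee : e = e' := by
      have h1 : K.index = e := hK
      have h2 : K'.index = e' := hK'
      rw [← h1, ← h2, hKK]
    subst hdd; subst hee; subst hKK
    have hvv : v' - v ∈ K := by
      have hmem : (((d : ℤ), v') : ℤ × A) ∈ hmk d v K := by
        rw [hval]
        exact mem_hmk.mpr ⟨1, by simp, by simpa using (zero_mem _)⟩
      rcases mem_hmk.mp hmem with ⟨k, hk1, hk2⟩
      have hk : k = 1 := by
        have hdz : (d : ℤ) ≠ 0 := Int.natCast_ne_zero.mpr hd
        have : (1 : ℤ) * d = k * d := by simpa using hk1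
        exact (mul_right_cancel₀ hdz this.symm)
      rw [hk, one_smul] at hk2
      exact hk2
    have : (QuotientAddGroup.mk v : A ⧸ K) = QuotientAddGroup.mk v' := by
      apply Quotient.sound'
      rw [QuotientAddGroup.leftRel_apply]
      simpa [neg_add_eq_sub] using hvv
    exact congrArg (fun t => (⟨⟨(e, d), hp⟩, ⟨K, hK⟩, t⟩ : Param A j)) this
  · rintro ⟨H, hH⟩
    have hH0 : H.index ≠ 0 := by rw [hH]; exact hj
    obtain ⟨d, v, hd, hdvH, hHeq⟩ := exists_hmk hH0
    set K := H.comap (AddMonoidHom.inr ℤ A) with hKdef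
    have hidx : K.index * d = j := by
      rw [← hH, hHeq, index_hmk hd]
    have hp : (K.index, d) ∈ j.divisorsAntidiagonal :=
      Nat.mem_divisorsAntidiagonal.mpr ⟨hidx, hj⟩
    refine ⟨⟨⟨(K.index, d), hp⟩, ⟨K, rfl⟩, QuotientAddGroup.mk v⟩, ?_⟩
    exact Subtype.ext (by rw [toSub_mk]; exact hHeq.symm)

lemma nat_card_sigma {ι : Type*} [Fintype ι] (π : ι → Type*) [h : ∀ i, Finite (π i)] :
    Nat.card (Σ i, π i) = ∑ i, Nat.card (π i) := by
  classical
  haveI : ∀ i, Fintype (π i) := fun i => Fintype.ofFinite _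
  simp [Nat.card_eq_fintype_card, Fintype.card_sigma]

lemma finite_quot {e : ℕ} (he : e ≠ 0) (K : AddSubgroup A) (hK : K.index = e) :
    Finite (A ⧸ K) := by
  apply Nat.finite_of_card_ne_zero
  rw [← AddSubgroup.index_eq_card, hK]
  exact he

lemma finite_step (hA : ∀ e : ℕ, e ≠ 0 → Finite {K : AddSubgroup A // K.index = e})
    {j : ℕ} (hj : j ≠ 0) : Finite {H : AddSubgroup (ℤ × A) // H.index = j} := by
  haveI : ∀ p : {p : ℕ × ℕ // p ∈ j.divisorsAntidiagonal},
      Finite (Σ K : {K : AddSubgroup A // K.index = p.1.1}, A ⧸ K.1) := by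
    intro p
    haveI h1 : Finite {K : AddSubgroup A // K.index = p.1.1} := hA _ (param_fst_ne_zero p)
    haveI h2 : ∀ K : {K : AddSubgroup A // K.index = p.1.1}, Finite (A ⧸ K.1) :=
      fun K => finite_quot (param_fst_ne_zero p) K.1 K.2
    infer_instance
  haveI : Finite (Param A j) := by unfold Param; infer_instance
  exact Finite.of_surjective _ (toSub_bijective hj).2

lemma card_step (hA : ∀ e : ℕ, e ≠ 0 → Finite {K : AddSubgroup A // K.index = e})
    {j : ℕ} (hj : j ≠ 0) :
    Nat.card {H : AddSubgroup (ℤ × A) // H.index = j} =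
      ∑ p ∈ j.divisorsAntidiagonal, p.1 * Nat.card {K : AddSubgroup A // K.index = p.1} := by
  classical
  rw [← Nat.card_eq_of_bijective _ (toSub_bijective hj)]
  haveI h1 : ∀ p : {p : ℕ × ℕ // p ∈ j.divisorsAntidiagonal},
      Finite {K : AddSubgroup A // K.index = p.1.1} := fun p => hA _ (param_fst_ne_zero p)
  haveI h2 : ∀ (p : {p : ℕ × ℕ // p ∈ j.divisorsAntidiagonal})
      (K : {K : AddSubgroup A // K.index = p.1.1}), Finite (A ⧸ K.1) :=
    fun p K => finite_quot (param_fst_ne_zero p) K.1 K.2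
  haveI : ∀ p : {p : ℕ × ℕ // p ∈ j.divisorsAntidiagonal},
      Finite (Σ K : {K : AddSubgroup A // K.index = p.1.1}, A ⧸ K.1) := fun p => inferInstance
  rw [show Nat.card (Param A j) = ∑ p : {p : ℕ × ℕ // p ∈ j.divisorsAntidiagonal},
      Nat.card (Σ K : {K : AddSubgroup A // K.index = p.1.1}, A ⧸ K.1) from
    nat_card_sigma _]
  have hinner : ∀ p : {p : ℕ × ℕ // p ∈ j.divisorsAntidiagonal},
      Nat.card (Σ K : {K : AddSubgroup A // K.index = p.1.1}, A ⧸ K.1) =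
        p.1.1 * Nat.card {K : AddSubgroup A // K.index = p.1.1} := by
    intro p
    haveI : Fintype {K : AddSubgroup A // K.index = p.1.1} := Fintype.ofFinite _
    rw [nat_card_sigma _]
    have hq : ∀ K : {K : AddSubgroup A // K.index = p.1.1}, Nat.card (A ⧸ K.1) = p.1.1 := by
      intro K
      rw [← AddSubgroup.index_eq_card, K.2]
    have hc : Fintype.card {K : AddSubgroup A // K.index = p.1.1} =
        Nat.card {K : AddSubgroup A // K.index = p.1.1} := Nat.card_eq_fintype_card.symm
    rw [Finset.sum_congr rfl (fun K _ => hq K), Finset.sum_const, Finset.card_univ,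
      smul_eq_mul, hc, mul_comm]
  rw [Finset.sum_congr rfl (fun p _ => hinner p)]
  rw [← Finset.sum_coe_sort (j.divisorsAntidiagonal)
    (fun p => p.1 * Nat.card {K : AddSubgroup A // K.index = p.1})]

end SubgroupGrowthProof2

namespace SubgroupGrowthProof3
open SubgroupGrowthProof SubgroupGrowthProof2

def subCongr {G G' : Type*} [AddGroup G] [AddGroup G'] (e : G ≃+ G') (j : ℕ) :
    {H : AddSubgroup G // H.index = j} ≃ {H' : AddSubgroup G' // H'.index = j} where
  toFun H := ⟨H.1.comap e.symm.toAddMonoidHom, by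
    rw [AddSubgroup.index_comap_of_surjective _ e.symm.surjective]; exact H.2⟩
  invFun H := ⟨H.1.comap e.toAddMonoidHom, by
    rw [AddSubgroup.index_comap_of_surjective _ e.surjective]; exact H.2⟩
  left_inv H := by
    apply Subtype.ext
    ext x
    simp [AddSubgroup.mem_comap]
  right_inv H := by
    apply Subtype.ext
    ext x
    simp [AddSubgroup.mem_comap]

def piSuccEquiv (n : ℕ) : (Fin (n + 1) → ℤ) ≃+ ℤ × (Fin n → ℤ) :=
  { (Fin.consEquiv fun _ : Fin (n + 1) => ℤ).symm with map_add' := fun _ _ => rfl }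

lemma subsingleton_fin0 : Subsingleton (AddSubgroup (Fin 0 → ℤ)) := by
  constructor
  intro H K
  ext x
  have hx : x = 0 := Subsingleton.elim x 0
  subst hx
  exact iff_of_true H.zero_mem K.zero_mem

lemma index_fin0 (H : AddSubgroup (Fin 0 → ℤ)) : H.index = 1 := by
  haveI := subsingleton_fin0
  have h : H = ⊤ := Subsingleton.elim _ _
  rw [h, AddSubgroup.index_top]

lemma finite_and_card (n j : ℕ) (hj : j ≠ 0) :
    Finite {H : AddSubgroup (Fin n → ℤ) // H.index = j} ∧
    Nat.card {H : AddSubgroup (Fin n → ℤ) // H.index = j} = acount n j := by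
  induction n generalizing j with
  | zero =>
    haveI := subsingleton_fin0
    constructor
    · exact Finite.of_fintype _
    · by_cases hj1 : j = 1
      · subst hj1
        haveI : Unique {H : AddSubgroup (Fin 0 → ℤ) // H.index = 1} :=
          { default := ⟨⊤, AddSubgroup.index_top⟩,
            uniq := fun H => Subtype.ext (Subsingleton.elim _ _) }
        rw [Nat.card_unique]
        rfl
      · haveI : IsEmpty {H : AddSubgroup (Fin 0 → ℤ) // H.index = j} := by
          constructor
          rintro ⟨H, hH⟩
          apply hj1
          rw [← hH, index_fin0 H]
        rw [Nat.card_of_isEmpty]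
        simp [acount, hj1]
  | succ n ih =>
    have hA : ∀ e : ℕ, e ≠ 0 → Finite {K : AddSubgroup (Fin n → ℤ) // K.index = e} :=
      fun e he => (ih e he).1
    have E := subCongr (piSuccEquiv n) j
    constructor
    · haveI := finite_step hA hj
      exact Finite.of_equiv _ E.symm
    · rw [Nat.card_congr E, card_step hA hj]
      show _ = ∑ p ∈ j.divisorsAntidiagonal, p.1 * acount n p.1
      refine Finset.sum_congr rfl fun p hp => ?_
      have hp1 : p.1 ≠ 0 := Nat.ne_of_gt (Nat.pos_of_mem_divisors
        (Nat.fst_mem_divisors_of_mem_antidiagonal hp))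
      rw [(ih p.1 hp1).2]

lemma count_eq (n m : ℕ) :
    subgroupCountUpTo n m = ∑ j ∈ Finset.Icc 1 m, acount n j := by
  classical
  have E : {H : AddSubgroup (Fin n → ℤ) // 1 ≤ H.index ∧ H.index ≤ m} ≃
      Σ j : {j : ℕ // j ∈ Finset.Icc 1 m}, {H : AddSubgroup (Fin n → ℤ) // H.index = j.1} := by
    refine ⟨fun H => ⟨⟨H.1.index, Finset.mem_Icc.mpr ⟨H.2.1, H.2.2⟩⟩, ⟨H.1, rfl⟩⟩,
      fun x => ⟨x.2.1, ?_⟩, ?_, ?_⟩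
    · rw [x.2.2]
      exact ⟨(Finset.mem_Icc.mp x.1.2).1, (Finset.mem_Icc.mp x.1.2).2⟩
    · rintro ⟨H, h⟩
      rfl
    · rintro ⟨⟨j, hj⟩, H, hH⟩
      dsimp only at hH
      subst hH
      rfl
  haveI : ∀ j : {j : ℕ // j ∈ Finset.Icc 1 m},
      Finite {H : AddSubgroup (Fin n → ℤ) // H.index = j.1} := by
    intro j
    have : j.1 ≠ 0 := by
      have := (Finset.mem_Icc.mp j.2).1
      omega
    exact (finite_and_card n j.1 this).1
  rw [subgroupCountUpTo, Nat.card_congr E, nat_card_sigma _]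
  rw [← Finset.sum_coe_sort (Finset.Icc 1 m) (fun j => acount n j)]
  refine Finset.sum_congr rfl fun j _ => ?_
  refine (finite_and_card n j.1 ?_).2
  have := (Finset.mem_Icc.mp j.2).1
  omega

end SubgroupGrowthProof3


namespace SubgroupGrowthAna

lemma pow_succ_sub_le (p x : ℕ) :
    (p + 1 : ℝ) * (x : ℝ) ^ p ≤ ((x : ℝ) + 1) ^ (p + 1) - (x : ℝ) ^ (p + 1) ∧
    ((x : ℝ) + 1) ^ (p + 1) - (x : ℝ) ^ (p + 1) ≤ (p + 1 : ℝ) * ((x : ℝ) + 1) ^ p := by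
  have hgeom := geom_sum₂_mul ((x : ℝ) + 1) (x : ℝ) (p + 1)
  simp only [add_sub_cancel_left, mul_one] at hgeom
  have hx0 : (0 : ℝ) ≤ (x : ℝ) := Nat.cast_nonneg x
  have hterm : ∀ i ∈ Finset.range (p + 1),
      (x : ℝ) ^ p ≤ ((x : ℝ) + 1) ^ i * (x : ℝ) ^ (p + 1 - 1 - i) ∧
      ((x : ℝ) + 1) ^ i * (x : ℝ) ^ (p + 1 - 1 - i) ≤ ((x : ℝ) + 1) ^ p := by
    intro i hi
    have hi' : i ≤ p := Nat.lt_succ_iff.mp (Finset.mem_range.mp hi)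
    have h1 : (x : ℝ) ^ i ≤ ((x : ℝ) + 1) ^ i :=
      pow_le_pow_left₀ hx0 (by linarith) i
    have h2 : (x : ℝ) ^ (p - i) ≤ ((x : ℝ) + 1) ^ (p - i) :=
      pow_le_pow_left₀ hx0 (by linarith) _
    have e1 : p + 1 - 1 - i = p - i := by omega
    constructor
    · rw [e1]
      calc (x:ℝ)^p = (x:ℝ)^i * (x:ℝ)^(p-i) := by rw [← pow_add]; congr 1; omega
        _ ≤ ((x:ℝ)+1)^i * (x:ℝ)^(p-i) := by
            apply mul_le_mul_of_nonneg_right h1 (pow_nonneg hx0 _)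
    · rw [e1]
      calc ((x:ℝ)+1)^i * (x:ℝ)^(p-i) ≤ ((x:ℝ)+1)^i * ((x:ℝ)+1)^(p-i) := by
            apply mul_le_mul_of_nonneg_left h2 (pow_nonneg (by linarith) _)
        _ = ((x:ℝ)+1)^p := by rw [← pow_add]; congr 1; omega
  constructor
  · rw [← hgeom]
    calc (p + 1 : ℝ) * (x:ℝ)^p = ∑ _i ∈ Finset.range (p+1), (x:ℝ)^p := by
          rw [Finset.sum_const, Finset.card_range]; push_cast; ring
      _ ≤ _ := Finset.sum_le_sum (fun i hi => (hterm i hi).1)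
  · rw [← hgeom]
    calc ∑ i ∈ Finset.range (p+1), ((x:ℝ)+1)^i * (x:ℝ)^(p+1-1-i)
        ≤ ∑ _i ∈ Finset.range (p+1), ((x:ℝ)+1)^p :=
          Finset.sum_le_sum (fun i hi => (hterm i hi).2)
      _ = (p + 1 : ℝ) * ((x:ℝ)+1)^p := by
          rw [Finset.sum_const, Finset.card_range]; push_cast; ring

/-- Riemann-sum limit for `x^p`. -/
lemma sum_pow_div_tendsto (p : ℕ) :
    Tendsto (fun m : ℕ => (∑ x ∈ range m, (x : ℝ) ^ p) / (m : ℝ) ^ (p + 1)) atTop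
      (𝓝 (1 / (p + 1))) := by
  have hp1 : (0:ℝ) < p + 1 := by positivity
  have htel1 : ∀ m : ℕ, ∑ x ∈ range m, (((x:ℝ)+1)^(p+1) - (x:ℝ)^(p+1)) = (m:ℝ)^(p+1) := by
    intro m
    have h := Finset.sum_range_sub (fun x : ℕ => ((x:ℝ))^(p+1))
    have h2 : ∀ x : ℕ, ((x:ℝ)+1)^(p+1) - (x:ℝ)^(p+1)
        = (((x+1 : ℕ)):ℝ)^(p+1) - ((x:ℕ):ℝ)^(p+1) := by intro x; push_cast; ring
    rw [Finset.sum_congr rfl (fun x _ => h2 x), h]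
    norm_num
  have upper : ∀ m : ℕ, ∑ x ∈ range m, (x:ℝ)^p ≤ (m:ℝ)^(p+1) / (p+1) := by
    intro m
    rw [le_div_iff₀ hp1, ← htel1 m, Finset.sum_mul]
    exact Finset.sum_le_sum (fun x _ => by have := (pow_succ_sub_le p x).1; linarith)
  have lower : ∀ m : ℕ, (m:ℝ)^(p+1) / (p+1) ≤ ∑ x ∈ range m, (x:ℝ)^p + (m:ℝ)^p := by
    intro m
    rw [div_le_iff₀ hp1, ← htel1 m]
    have h1 : ∑ x ∈ range m, (((x:ℝ)+1)^(p+1) - (x:ℝ)^(p+1)) ≤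
        ∑ x ∈ range m, (p+1:ℝ) * ((x:ℝ)+1)^p :=
      Finset.sum_le_sum (fun x _ => (pow_succ_sub_le p x).2)
    have h2 : ∑ x ∈ range m, (p+1:ℝ) * ((x:ℝ)+1)^p
        = (p+1:ℝ) * ∑ x ∈ range m, (((x+1:ℕ)):ℝ)^p := by
      rw [Finset.mul_sum]
      exact Finset.sum_congr rfl (fun x _ => by push_cast; ring)
    have h3 : ∑ x ∈ range m, (((x+1:ℕ)):ℝ)^p ≤ ∑ x ∈ range m, ((x:ℕ):ℝ)^p + (m:ℝ)^p := by
      have h4 := Finset.sum_range_succ' (fun x : ℕ => ((x:ℕ):ℝ)^p) m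
      have h5 := Finset.sum_range_succ (fun x : ℕ => ((x:ℕ):ℝ)^p) m
      have h6 : (0:ℝ) ≤ ((0:ℕ):ℝ)^p := by positivity
      -- h4 : ∑_{range (m+1)} = ∑_{x<m} f (x+1) + f 0
      -- h5 : ∑_{range (m+1)} = ∑_{range m} + f m
      have h7 : (0:ℝ) ≤ (0:ℝ)^p := by positivity
      push_cast at h4 h5 ⊢
      linarith [h4, h5, h7]
    calc ∑ x ∈ range m, (((x:ℝ)+1)^(p+1) - (x:ℝ)^(p+1))
        ≤ (p+1:ℝ) * ∑ x ∈ range m, (((x+1:ℕ)):ℝ)^p := by rw [← h2]; exact h1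
      _ ≤ (p+1:ℝ) * (∑ x ∈ range m, ((x:ℕ):ℝ)^p + (m:ℝ)^p) := by
          apply mul_le_mul_of_nonneg_left h3 (le_of_lt hp1)
      _ = (∑ x ∈ range m, (x:ℝ)^p + (m:ℝ)^p) * (p+1:ℝ) := by ring
  have hlow : Tendsto (fun m : ℕ => 1/(p+1:ℝ) - 1/(m:ℝ)) atTop (𝓝 (1/(p+1))) := by
    have := tendsto_one_div_atTop_nhds_zero_nat (𝕜 := ℝ)
    have h := Tendsto.sub (tendsto_const_nhds (x := 1/(p+1:ℝ))) this
    simpa using h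
  refine tendsto_of_tendsto_of_tendsto_of_le_of_le' hlow tendsto_const_nhds ?_ ?_
  · filter_upwards [eventually_ge_atTop 1] with m hm
    have hm0 : (0:ℝ) < (m:ℝ) := by exact_mod_cast hm
    have hmp : (0:ℝ) < (m:ℝ)^(p+1) := by positivity
    have e1 : (1/(p+1:ℝ) - 1/(m:ℝ)) = ((m:ℝ)^(p+1)/(p+1) - (m:ℝ)^p)/(m:ℝ)^(p+1) := by
      field_simp
      ring
    rw [e1, div_le_div_iff_of_pos_right hmp]
    linarith [lower m]
  · filter_upwards [eventually_ge_atTop 1] with m hm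
    have hm0 : (0:ℝ) < (m:ℝ) := by exact_mod_cast hm
    have hmp : (0:ℝ) < (m:ℝ)^(p+1) := by positivity
    rw [div_le_div_iff₀ hmp hp1]
    have h := (le_div_iff₀ hp1).mp (upper m)
    linarith

end SubgroupGrowthAna

namespace SubgroupGrowthAna2
open SubgroupGrowthAna

lemma sum_pow_tendsto_atTop (p : ℕ) :
    Tendsto (fun m : ℕ => ∑ x ∈ range m, (x : ℝ) ^ p) atTop atTop := by
  have h1 := sum_pow_div_tendsto p
  have h2 : Tendsto (fun m : ℕ => ((m : ℝ)) ^ (p + 1)) atTop atTop :=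
    (tendsto_pow_atTop (Nat.succ_ne_zero p)).comp tendsto_natCast_atTop_atTop
  have h3 := Filter.Tendsto.pos_mul_atTop (by positivity) h1 h2
  apply h3.congr'
  filter_upwards [eventually_ge_atTop 1] with m hm
  have hm0 : ((m : ℝ)) ^ (p + 1) ≠ 0 := by
    have : (0:ℝ) < (m:ℝ) := by exact_mod_cast hm
    positivity
  field_simp

lemma avg_tendsto {f : ℕ → ℝ} {p : ℕ} {c : ℝ}
    (hf : Tendsto (fun m : ℕ => f m / (m : ℝ) ^ p) atTop (𝓝 c)) :
    Tendsto (fun m : ℕ => (∑ x ∈ range m, f x) / (m : ℝ) ^ (p + 1)) atTop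
      (𝓝 (c / (p + 1))) := by
  have hg : (fun x : ℕ => f x - c * (x : ℝ) ^ p) =o[atTop] (fun x : ℕ => (x : ℝ) ^ p) := by
    rw [Asymptotics.isLittleO_iff_tendsto' ?side]
    case side =>
      filter_upwards [eventually_ge_atTop 1] with x hx h0
      have : (0:ℝ) < (x:ℝ) := by exact_mod_cast hx
      exact absurd h0 (by positivity)
    · have h := hf.sub (tendsto_const_nhds (x := c))
      rw [sub_self] at h
      apply h.congr'
      filter_upwards [eventually_ge_atTop 1] with x hx
      have hx0 : ((x:ℝ))^p ≠ 0 := by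
        have : (0:ℝ) < (x:ℝ) := by exact_mod_cast hx
        positivity
      field_simp
  have hsum := hg.sum_range (fun i => by positivity) (sum_pow_tendsto_atTop p)
  have hbigO : (fun m : ℕ => ∑ x ∈ range m, (x:ℝ)^p) =O[atTop]
      (fun m : ℕ => (m:ℝ)^(p+1)) := by
    apply Asymptotics.isBigO_of_div_tendsto_nhds ?side2 ((1:ℝ)/((p:ℝ)+1))
    case side2 =>
      filter_upwards with m h0
      have hm : m = 0 := by
        by_contra hm
        have : (0:ℝ) < (m:ℝ) := by
          have : 0 < m := Nat.pos_of_ne_zero hm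
          exact_mod_cast this
        exact absurd h0 (by positivity)
      subst hm
      simp
    · exact sum_pow_div_tendsto p
  have hlittle := (hsum.trans_isBigO hbigO).tendsto_div_nhds_zero
  have hcpart : Tendsto (fun m : ℕ => c * ((∑ x ∈ range m, (x:ℝ)^p) / (m:ℝ)^(p+1))) atTop
      (𝓝 (c * (1/(p+1)))) := (sum_pow_div_tendsto p).const_mul c
  have := hlittle.add hcpart
  rw [zero_add] at this
  have heq : ∀ m : ℕ, (∑ x ∈ range m, (f x - c * (x:ℝ)^p)) / (m:ℝ)^(p+1)
      + c * ((∑ x ∈ range m, (x:ℝ)^p) / (m:ℝ)^(p+1))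
      = (∑ x ∈ range m, f x) / (m:ℝ)^(p+1) := by
    intro m
    rw [Finset.sum_sub_distrib, ← Finset.mul_sum]
    ring
  have hres := this.congr heq
  have : c * (1/((p:ℝ)+1)) = c / ((p:ℝ)+1) := by ring
  rw [this] at hres
  exact_mod_cast hres

end SubgroupGrowthAna2

namespace SubgroupGrowthAna3

open Finset

lemma abel_id (a : ℕ → ℕ) (m : ℕ) :
    (∑ e ∈ Icc 1 m, e * a e) + ∑ y ∈ range m, (∑ j ∈ Icc 1 y, a j)
      = m * ∑ j ∈ Icc 1 m, a j := by
  have h1 : ∑ e ∈ Icc 1 m, e * a e = ∑ x ∈ Icc 1 m, ∑ e ∈ Icc x m, a e := by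
    have hc : ∀ e ∈ Icc 1 m, e * a e = ∑ _x ∈ Icc 1 e, a e := by
      intro e _
      rw [Finset.sum_const, Nat.card_Icc, smul_eq_mul]
      simp
    rw [Finset.sum_congr rfl hc]
    refine Finset.sum_comm' ?_
    intro e x
    simp only [Finset.mem_Icc]
    omega
  have h2 : ∑ y ∈ range m, (∑ j ∈ Icc 1 y, a j) = ∑ x ∈ Icc 1 m, ∑ j ∈ Icc 1 (x-1), a j := by
    rw [← Finset.Ico_add_one_right_eq_Icc 1 m, Finset.sum_Ico_eq_sum_range]
    have hr : m + 1 - 1 = m := by omega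
    rw [hr]
    refine (Finset.sum_congr rfl ?_).symm
    intro k _
    have hk : 1 + k - 1 = k := by omega
    rw [hk]
  rw [h1, h2, ← Finset.sum_add_distrib]
  have h3 : ∀ x ∈ Icc 1 m, ((∑ e ∈ Icc x m, a e) + ∑ j ∈ Icc 1 (x-1), a j)
      = ∑ j ∈ Icc 1 m, a j := by
    intro x hx
    rcases Finset.mem_Icc.mp hx with ⟨hx1, hx2⟩
    have hcons := Finset.sum_Ico_consecutive a (show 1 ≤ x by omega) (show x ≤ m+1 by omega)
    rw [← Finset.Ico_add_one_right_eq_Icc 1 m, ← hcons, ← Finset.Ico_add_one_right_eq_Icc x m,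
      ← Finset.Ico_add_one_right_eq_Icc 1 (x-1)]
    have hx' : x - 1 + 1 = x := by omega
    rw [hx']
    exact Nat.add_comm _ _
  rw [Finset.sum_congr rfl h3, Finset.sum_const, Nat.card_Icc, smul_eq_mul]
  have hm : m + 1 - 1 = m := by omega
  rw [hm]

lemma step_id (a : ℕ → ℕ) (m : ℕ) :
    ∑ j ∈ Icc 1 m, ∑ p ∈ j.divisorsAntidiagonal, p.1 * a p.1
      = ∑ d ∈ Icc 1 m, ∑ e ∈ Icc 1 (m / d), e * a e := by
  rw [Finset.sum_sigma' (Icc 1 m) (fun j => j.divisorsAntidiagonal)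
      (fun _j p => p.1 * a p.1),
    Finset.sum_sigma' (Icc 1 m) (fun d => Icc 1 (m / d)) (fun _d (e : ℕ) => e * a e)]
  refine Finset.sum_nbij' (fun x => ⟨x.2.2, x.2.1⟩) (fun y => ⟨y.2 * y.1, (y.2, y.1)⟩)
    ?_ ?_ ?_ ?_ ?_
  · rintro ⟨j, e, d⟩ hx
    rw [Finset.mem_sigma] at hx
    obtain ⟨hj, hp⟩ := hx
    rw [Finset.mem_Icc] at hj
    rw [Nat.mem_divisorsAntidiagonal] at hp
    obtain ⟨hed, hj0⟩ := hp
    dsimp only at hed hj0 hj ⊢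
    rw [Finset.mem_sigma, Finset.mem_Icc, Finset.mem_Icc]
    have hd0 : 0 < d := by
      rcases Nat.eq_zero_or_pos d with h | h
      · subst h; simp at hed; omega
      · exact h
    have he0 : 0 < e := by
      rcases Nat.eq_zero_or_pos e with h | h
      · subst h; simp at hed; omega
      · exact h
    refine ⟨⟨hd0, ?_⟩, he0, ?_⟩
    · calc d ≤ e * d := Nat.le_mul_of_pos_left d he0
        _ = j := hed
        _ ≤ m := hj.2
    · rw [Nat.le_div_iff_mul_le hd0, hed]
      exact hj.2
  · rintro ⟨d, e⟩ hy
    rw [Finset.mem_sigma] at hy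
    obtain ⟨hd, he⟩ := hy
    rw [Finset.mem_Icc] at hd he
    rw [Finset.mem_sigma, Finset.mem_Icc, Nat.mem_divisorsAntidiagonal]
    have hd0 : 0 < d := hd.1
    have he0 : 0 < e := he.1
    have hedm : e * d ≤ m := (Nat.le_div_iff_mul_le hd0).mp he.2
    exact ⟨⟨Nat.mul_pos he0 hd0, hedm⟩, rfl, Nat.mul_ne_zero (by omega) (by omega)⟩
  · rintro ⟨j, ⟨e, d⟩⟩ hx
    rw [Finset.mem_sigma] at hx
    obtain ⟨-, hp⟩ := hx
    rw [Nat.mem_divisorsAntidiagonal] at hp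
    obtain ⟨hed, -⟩ := hp
    dsimp only at hed
    subst hed
    rfl
  · rintro ⟨d, e⟩ _
    rfl
  · rintro ⟨j, ⟨e, d⟩⟩ _
    rfl

end SubgroupGrowthAna3

namespace SubgroupGrowthAna4
open SubgroupGrowthAna SubgroupGrowthAna2 SubgroupGrowthAna3

noncomputable def Z (k : ℕ) : ℝ := ∑' d : ℕ, 1 / ((d : ℝ) + 1) ^ k

lemma summable_Zf {k : ℕ} (hk : 2 ≤ k) : Summable (fun d : ℕ => 1 / ((d : ℝ) + 1) ^ k) := by
  have h1 : Summable (fun n : ℕ => 1 / (n : ℝ) ^ k) :=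
    Real.summable_one_div_nat_pow.mpr (by omega)
  have h2 := (summable_nat_add_iff 1).mpr h1
  apply h2.congr
  intro d
  push_cast
  ring_nf

lemma exists_bound {u : ℕ → ℝ} {n : ℕ} {c : ℝ}
    (h : Tendsto (fun m : ℕ => u m / (m : ℝ) ^ n) atTop (𝓝 c))
    (h0 : u 0 = 0) (hnn : ∀ m, 0 ≤ u m) :
    ∃ C : ℝ, 0 ≤ C ∧ ∀ m : ℕ, u m ≤ C * (m : ℝ) ^ n := by
  obtain ⟨B, hB⟩ := h.bddAbove_range
  refine ⟨max B 0, le_max_right _ _, fun m => ?_⟩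
  rcases Nat.eq_zero_or_pos m with rfl | hm
  · rw [h0]
    positivity
  · have hm0 : (0 : ℝ) < (m : ℝ) := by exact_mod_cast hm
    have hmem : u m / (m : ℝ) ^ n ≤ B := hB (Set.mem_range_self m)
    have hpow : (0 : ℝ) < (m : ℝ) ^ n := by positivity
    calc u m = (u m / (m : ℝ) ^ n) * (m : ℝ) ^ n := by field_simp
      _ ≤ max B 0 * (m : ℝ) ^ n := by
          apply mul_le_mul_of_nonneg_right (le_trans hmem (le_max_left _ _)) (le_of_lt hpow)

lemma div_cast_tendsto (q : ℕ) (hq : 0 < q) :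
    Tendsto (fun m : ℕ => ((m / q : ℕ) : ℝ) / (m : ℝ)) atTop (𝓝 (1 / (q : ℝ))) := by
  have hq0 : ((q : ℝ)) ≠ 0 := by positivity
  have key : ∀ m : ℕ, 1 ≤ m → ((m / q : ℕ) : ℝ) / (m : ℝ)
      = 1 / (q : ℝ) - ((m % q : ℕ) : ℝ) / ((q : ℝ) * (m : ℝ)) := by
    intro m hm
    have hm0 : ((m : ℝ)) ≠ 0 := by
      have : (0:ℝ) < (m:ℝ) := by exact_mod_cast hm
      positivity
    have hdm := Nat.div_add_mod m q
    have hdm' : ((q : ℝ)) * ((m / q : ℕ) : ℝ) + ((m % q : ℕ) : ℝ) = (m : ℝ) := by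
      exact_mod_cast congrArg (Nat.cast : ℕ → ℝ) hdm
    have hdiv : ((m / q : ℕ) : ℝ) = ((m : ℝ) - ((m % q : ℕ) : ℝ)) / (q : ℝ) := by
      rw [eq_div_iff hq0]
      linarith
    rw [hdiv]
    field_simp
  have hsq : Tendsto (fun m : ℕ => ((m % q : ℕ) : ℝ) / ((q : ℝ) * (m : ℝ))) atTop (𝓝 0) := by
    apply squeeze_zero' (Filter.Eventually.of_forall (fun m => by positivity))
      (g := fun m : ℕ => 1 / (m : ℝ))
    · filter_upwards [eventually_ge_atTop 1] with m hm
      have hm0 : (0:ℝ) < (m:ℝ) := by exact_mod_cast hm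
      have h1 : ((m % q : ℕ) : ℝ) ≤ (q : ℝ) := by
        have := Nat.mod_lt m hq
        exact_mod_cast le_of_lt this
      rw [div_le_div_iff₀ (by positivity) hm0]
      calc ((m % q : ℕ) : ℝ) * (m:ℝ) ≤ (q:ℝ) * (m:ℝ) :=
            mul_le_mul_of_nonneg_right h1 (le_of_lt hm0)
        _ = 1 * ((q:ℝ) * (m:ℝ)) := by ring
    · exact tendsto_one_div_atTop_nhds_zero_nat
  have := (tendsto_const_nhds (x := 1/(q:ℝ))).sub hsq
  rw [sub_zero] at this
  apply this.congr'
  filter_upwards [eventually_ge_atTop 1] with m hm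
  exact (key m hm).symm

lemma nat_div_tendsto_atTop (q : ℕ) (hq : 0 < q) :
    Tendsto (fun m : ℕ => m / q) atTop atTop := by
  apply tendsto_atTop_atTop.mpr
  intro b
  exact ⟨b * q, fun m hm => (Nat.le_div_iff_mul_le hq).mpr hm⟩

/-- The key dominated-convergence step. -/
lemma step_analytic {T : ℕ → ℕ} {β : ℝ} {n : ℕ} (hn : 1 ≤ n)
    (hT : Tendsto (fun m : ℕ => (T m : ℝ) / (m : ℝ) ^ (n + 1)) atTop (𝓝 β))
    {C : ℝ} (hC : ∀ m : ℕ, (T m : ℝ) ≤ C * (m : ℝ) ^ (n + 1)) (hT0 : T 0 = 0) :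
    Tendsto (fun m : ℕ => ((∑ d ∈ Finset.Icc 1 m, T (m / d) : ℕ) : ℝ) / (m : ℝ) ^ (n + 1))
      atTop (𝓝 (β * Z (n + 1))) := by
  have hC0 : 0 ≤ C := by
    have h1 := hC 1
    have h2 : (0:ℝ) ≤ (T 1 : ℝ) := Nat.cast_nonneg _
    simpa using le_trans h2 h1
  set F : ℕ → ℕ → ℝ := fun m d => (T (m / (d + 1)) : ℝ) / (m : ℝ) ^ (n + 1) with hF
  have hbound : ∀ m : ℕ, ∀ d : ℕ, ‖F m d‖ ≤ C / ((d : ℝ) + 1) ^ (n + 1) := by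
    intro m d
    rw [Real.norm_eq_abs, abs_of_nonneg (by positivity)]
    rcases Nat.eq_zero_or_pos m with rfl | hm
    · simp only [hF, Nat.zero_div, hT0]
      simp
      positivity
    · have hm0 : (0:ℝ) < (m:ℝ) := by exact_mod_cast hm
      have hd1 : (0:ℝ) < (d:ℝ) + 1 := by positivity
      have h1 : ((m / (d+1) : ℕ) : ℝ) ≤ (m : ℝ) / ((d:ℝ) + 1) := by
        have := Nat.cast_div_le (α := ℝ) (m := m) (n := d + 1)
        push_cast at this ⊢
        exact this
      have h2 : (T (m / (d+1)) : ℝ) ≤ C * ((m:ℝ) / ((d:ℝ)+1)) ^ (n+1) := by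
        calc (T (m / (d+1)) : ℝ) ≤ C * ((m / (d+1) : ℕ) : ℝ) ^ (n+1) := hC _
          _ ≤ C * ((m:ℝ) / ((d:ℝ)+1)) ^ (n+1) := by
              apply mul_le_mul_of_nonneg_left _ hC0
              exact pow_le_pow_left₀ (Nat.cast_nonneg _) h1 _
      rw [div_le_iff₀ (by positivity)]
      calc (T (m / (d+1)) : ℝ) ≤ C * ((m:ℝ) / ((d:ℝ)+1)) ^ (n+1) := h2
        _ = C / ((d:ℝ)+1)^(n+1) * (m:ℝ)^(n+1) := by
            rw [div_pow]
            ring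
  have hsummable : Summable (fun d : ℕ => C / ((d : ℝ) + 1) ^ (n + 1)) := by
    have := (summable_Zf (k := n + 1) (by omega)).mul_left C
    apply this.congr
    intro d
    ring
  have hpoint : ∀ d : ℕ, Tendsto (fun m : ℕ => F m d) atTop
      (𝓝 (β * (1 / ((d:ℝ) + 1) ^ (n + 1)))) := by
    intro d
    have hq : 0 < d + 1 := Nat.succ_pos d
    have h1 := hT.comp (nat_div_tendsto_atTop (d+1) hq)
    have h2 := (div_cast_tendsto (d+1) hq).pow (n+1)
    have h3 := h1.mul h2
    have hconst : β * (1 / ((d:ℝ)+1))^(n+1) = β * (1 / ((d:ℝ)+1)^(n+1)) := by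
      rw [div_pow, one_pow]
    rw [← hconst]
    have hcast : ((d+1 : ℕ) : ℝ) = (d:ℝ) + 1 := by push_cast; ring
    rw [← hcast]
    apply h3.congr'
    filter_upwards [eventually_ge_atTop (d+1)] with m hm
    have hk1 : 1 ≤ m / (d+1) := (Nat.le_div_iff_mul_le hq).mpr (by omega)
    have hk0 : (0:ℝ) < ((m / (d+1) : ℕ) : ℝ) := by exact_mod_cast hk1
    have hm0 : (0:ℝ) < (m:ℝ) := by
      have : 1 ≤ m := le_trans hq hm
      exact_mod_cast this
    show (T (m/(d+1)) : ℝ) / ((m/(d+1) : ℕ) : ℝ)^(n+1) * (((m/(d+1) : ℕ) : ℝ)/(m:ℝ))^(n+1)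
        = F m d
    rw [hF]
    field_simp
    rw [div_pow, mul_assoc, div_mul_cancel₀ _ (by positivity)]
  have hDCT := tendsto_tsum_of_dominated_convergence hsummable hpoint
    (Filter.Eventually.of_forall (fun m => fun d => hbound m d))
  have htsum_lim : ∑' d : ℕ, β * (1 / ((d:ℝ) + 1) ^ (n + 1)) = β * Z (n+1) := by
    rw [tsum_mul_left]
    rfl
  rw [htsum_lim] at hDCT
  apply hDCT.congr
  intro m
  have hsupp : ∀ d : ℕ, d ∉ Finset.range m → F m d = 0 := by
    intro d hd
    rw [Finset.mem_range, not_lt] at hd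
    have : m / (d + 1) = 0 := Nat.div_eq_of_lt (by omega)
    rw [hF]
    simp only [this, hT0]
    simp
  rw [tsum_eq_sum hsupp]
  rw [Nat.cast_sum, Finset.sum_div]
  rw [← Finset.Ico_add_one_right_eq_Icc 1 m, Finset.sum_Ico_eq_sum_range]
  have hr : m + 1 - 1 = m := by omega
  rw [hr]
  apply Finset.sum_congr rfl
  intro d _
  rw [hF, Nat.add_comm 1 d]

end SubgroupGrowthAna4

namespace SubgroupGrowthMain
open SubgroupGrowthProof SubgroupGrowthProof2 SubgroupGrowthProof3
open SubgroupGrowthAna SubgroupGrowthAna2 SubgroupGrowthAna3 SubgroupGrowthAna4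

lemma acount_one {j : ℕ} (hj : j ≠ 0) : acount 1 j = 1 := by
  show ∑ p ∈ j.divisorsAntidiagonal, p.1 * acount 0 p.1 = 1
  rw [Finset.sum_eq_single (1, j)]
  · simp [acount]
  · rintro ⟨e, d⟩ hp hne
    have hmem := Nat.mem_divisorsAntidiagonal.mp hp
    dsimp only at hmem ⊢
    rcases eq_or_ne e 1 with rfl | he
    · exfalso
      apply hne
      have : d = j := by omega
      rw [this]
    · simp [acount, he]
  · intro h
    exact absurd (Nat.mem_divisorsAntidiagonal.mpr ⟨one_mul j, hj⟩) h

/-- Main real-valued asymptotic result. -/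
theorem main_real (n : ℕ) (hn : 1 ≤ n) :
    Tendsto (fun m : ℕ => ((∑ j ∈ Finset.Icc 1 m, acount n j : ℕ) : ℝ) / (m : ℝ) ^ n)
      atTop (𝓝 ((1 / (n : ℝ)) * ∏ k ∈ Finset.Icc 2 n, Z k)) := by
  induction n, hn using Nat.le_induction with
  | base =>
    have hIcc : Finset.Icc 2 1 = (∅ : Finset ℕ) := Finset.Icc_eq_empty (by omega)
    rw [hIcc, Finset.prod_empty]
    have h1 : (1 / ((1:ℕ):ℝ)) * 1 = 1 := by norm_num
    rw [h1]
    have hS : ∀ m : ℕ, (∑ j ∈ Finset.Icc 1 m, acount 1 j : ℕ) = m := by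
      intro m
      rw [Finset.sum_congr rfl (fun j hj => acount_one (by
        have := (Finset.mem_Icc.mp hj).1; omega))]
      rw [Finset.sum_const, smul_eq_mul, mul_one, Nat.card_Icc]
      omega
    have hone : Tendsto (fun _ : ℕ => (1:ℝ)) atTop (𝓝 1) := tendsto_const_nhds
    apply hone.congr'
    filter_upwards [eventually_ge_atTop 1] with m hm
    have hm0 : ((m:ℝ)) ≠ 0 := by
      have : (0:ℝ) < m := by exact_mod_cast hm
      positivity
    rw [hS m, pow_one, div_self hm0]
  | succ n hn ih =>
    have hn0 : ((n:ℝ)) ≠ 0 := by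
      have : (0:ℝ) < n := by exact_mod_cast hn
      positivity
    set c : ℝ := (1 / (n : ℝ)) * ∏ k ∈ Finset.Icc 2 n, Z k with hc
    have hSnn : ∀ m : ℕ, (0:ℝ) ≤ ((∑ j ∈ Finset.Icc 1 m, acount n j : ℕ):ℝ) :=
      fun m => Nat.cast_nonneg _
    obtain ⟨C, hC0, hCb⟩ := exists_bound ih (by simp) hSnn
    have havg := avg_tendsto (p := n) (c := c) ih
    set T : ℕ → ℕ := fun m => ∑ e ∈ Finset.Icc 1 m, e * acount n e with hTdef
    have habel : ∀ m : ℕ, (T m : ℝ)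
        = (m : ℝ) * ((∑ j ∈ Finset.Icc 1 m, acount n j : ℕ):ℝ)
          - ∑ y ∈ Finset.range m, ((∑ j ∈ Finset.Icc 1 y, acount n j : ℕ):ℝ) := by
      intro m
      have h := abel_id (acount n) m
      have hcast := congrArg (Nat.cast : ℕ → ℝ) h
      simp only [hTdef]
      push_cast at hcast ⊢
      linarith [hcast]
    have hT : Tendsto (fun m : ℕ => (T m : ℝ)/(m:ℝ)^(n+1)) atTop (𝓝 (c - c/(n+1))) := by
      have h1 : Tendsto (fun m : ℕ =>
          (m:ℝ) * ((∑ j ∈ Finset.Icc 1 m, acount n j : ℕ):ℝ)/(m:ℝ)^(n+1)) atTop (𝓝 c) := by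
        apply ih.congr'
        filter_upwards [eventually_ge_atTop 1] with m hm
        have hm0 : ((m:ℝ)) ≠ 0 := by
          have : (0:ℝ) < m := by exact_mod_cast hm
          positivity
        field_simp
        ring
      have h2 := h1.sub havg
      apply h2.congr
      intro m
      rw [habel m, sub_div]
    have hb2 : ∀ m : ℕ, (T m : ℝ) ≤ C * (m:ℝ)^(n+1) := by
      have hTle : ∀ m : ℕ, T m ≤ m * (∑ j ∈ Finset.Icc 1 m, acount n j) := by
        intro m
        calc T m ≤ ∑ e ∈ Finset.Icc 1 m, m * acount n e := by
              apply Finset.sum_le_sum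
              intro e he
              exact Nat.mul_le_mul_right _ (Finset.mem_Icc.mp he).2
          _ = m * ∑ e ∈ Finset.Icc 1 m, acount n e := by rw [Finset.mul_sum]
      intro m
      calc (T m : ℝ) ≤ (m:ℝ) * ((∑ j ∈ Finset.Icc 1 m, acount n j : ℕ):ℝ) := by
            exact_mod_cast hTle m
        _ ≤ (m:ℝ) * (C * (m:ℝ)^n) :=
            mul_le_mul_of_nonneg_left (hCb m) (Nat.cast_nonneg _)
        _ = C * (m:ℝ)^(n+1) := by ring
    have hT0 : T 0 = 0 := by simp [hTdef]
    have hstep := step_analytic hn hT hb2 hT0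
    have hid : ∀ m : ℕ, (∑ d ∈ Finset.Icc 1 m, T (m / d))
        = ∑ j ∈ Finset.Icc 1 m, acount (n+1) j := by
      intro m
      have h := step_id (acount n) m
      have hdef : ∀ j : ℕ, acount (n+1) j = ∑ p ∈ j.divisorsAntidiagonal, p.1 * acount n p.1 :=
        fun j => rfl
      rw [Finset.sum_congr rfl (fun j _ => hdef j)]
      exact h.symm
    have hconst : (c - c/(n+1)) * Z (n+1)
        = (1/((n+1:ℕ):ℝ)) * ∏ k ∈ Finset.Icc 2 (n+1), Z k := by
      rw [Finset.prod_Icc_succ_top (by omega : 2 ≤ n + 1), hc]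
      push_cast
      field_simp
      ring
    rw [← hconst]
    apply hstep.congr
    intro m
    rw [hid m]

lemma Z_eq_zeta {k : ℕ} (hk : 2 ≤ k) : ((Z k : ℝ) : ℂ) = riemannZeta (k : ℂ) := by
  rw [zeta_eq_tsum_one_div_nat_add_one_cpow (by
    rw [Complex.natCast_re]
    exact_mod_cast (by omega : 1 < k))]
  rw [Z]
  have hmap := Complex.ofRealCLM.map_tsum (summable_Zf hk)
  simp only [Complex.ofRealCLM_apply] at hmap
  rw [hmap]
  congr 1
  funext d
  rw [Complex.cpow_natCast]
  push_cast
  norm_num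

end SubgroupGrowthMain

/-- As `m → ∞`, `s_m(ℤ^n)/m^n → (1/n)·ζ(n)ζ(n-1)⋯ζ(2)` (the empty product being `1` for
`n = 1`), where `ζ` is the Riemann zeta function. -/
theorem subgroup_growth_asymptotics_of_Zn (n : ℕ) (hn : 1 ≤ n) :
    Tendsto (fun m : ℕ => (subgroupCountUpTo n m : ℂ) / (m : ℂ) ^ n) atTop
      (nhds ((1 / (n : ℂ)) * ∏ k ∈ Finset.Icc 2 n, riemannZeta (k : ℂ))) := by
  have hreal := SubgroupGrowthMain.main_real n hn
  have hcplx := (Complex.continuous_ofReal.tendsto _).comp hreal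
  have hlim : ((((1 / (n : ℝ)) * ∏ k ∈ Finset.Icc 2 n,
      SubgroupGrowthAna4.Z k : ℝ)) : ℂ)
      = (1 / (n : ℂ)) * ∏ k ∈ Finset.Icc 2 n, riemannZeta (k : ℂ) := by
    push_cast [Complex.ofReal_prod]
    congr 1
    refine Finset.prod_congr rfl fun k hk => ?_
    exact SubgroupGrowthMain.Z_eq_zeta (Finset.mem_Icc.mp hk).1
  rw [← hlim]
  apply hcplx.congr
  intro m
  rw [Function.comp_apply, SubgroupGrowthProof3.count_eq n m]
  push_cast
  ring
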